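/- Let L be an n×n graph Laplacian and E an n×n real matrix such that L' = L + E is also a graph Laplacian, let p ∈ {1, 2, ∞}, and suppose ‖E‖_p ≤ ε‖L‖_p < 1 for some ε > 0, where ‖·‖_p denotes the operator norm on matrices induced by the vector ℓp norm. Let s, r ∈ ℝⁿ satisfy ‖s‖_p ≤ γ and ‖r‖_p ≤ γ. Then the superposition distances (with α = 1 and input norm ℓp) computed on L and on L' satisfy |d_sps^{L'}(s,r) − d_sps^{L}(s,r)| ≤ 2γ‖L‖_p ε. -/

import Mathlib

open Matrix MeasureTheory

/-- A graph Laplacian: real symmetric matrix with nonpositive off-diagonal entries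
whose rows each sum to zero. -/
def IsGraphLaplacian {n : ℕ} (L : Matrix (Fin n) (Fin n) ℝ) : Prop :=
  L.IsSymm ∧ (∀ i j, i ≠ j → L i j ≤ 0) ∧ ∀ i, ∑ j, L i j = 0

/-- The ℓp norm of a vector in `ℝⁿ`. -/
noncomputable def lpNorm (p : ENNReal) [Fact (1 ≤ p)] {n : ℕ} (x : Fin n → ℝ) : ℝ :=
  ‖(WithLp.equiv p (Fin n → ℝ)).symm x‖

/-- The operator norm on matrices induced by the vector ℓp norm:
`‖M‖_p := sup {‖Mx‖_p : ‖x‖_p = 1}`. -/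
noncomputable def lpOpNorm (p : ENNReal) [Fact (1 ≤ p)] {n : ℕ}
    (M : Matrix (Fin n) (Fin n) ℝ) : ℝ :=
  sSup ((fun x => lpNorm p (M.mulVec x)) '' {x : Fin n → ℝ | lpNorm p x = 1})

/-- The superposition distance with diffusion constant `α = 1` and input norm ℓp:
`d_sps^L(s,r) := ∫₀^∞ e^{−t} ‖e^{−Lt}(s − r)‖_p dt`. -/
noncomputable def spsDistP (p : ENNReal) [Fact (1 ≤ p)] {n : ℕ}
    (L : Matrix (Fin n) (Fin n) ℝ) (s r : Fin n → ℝ) : ℝ :=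
  ∫ t in Set.Ioi (0 : ℝ), Real.exp (-t) * lpNorm p ((NormedSpace.exp ((-t) • L)).mulVec (s - r))

section AuxMatrix

open NormedSpace

variable {n : ℕ}

lemma aux_pow_mulVec_one (M : Matrix (Fin n) (Fin n) ℝ) (h : M.mulVec 1 = 0) (k : ℕ)
    (hk : k ≠ 0) : (M ^ k).mulVec 1 = 0 := by
  induction k with
  | zero => exact absurd rfl hk
  | succ m ih =>
    rw [pow_succ, ← Matrix.mulVec_mulVec, h, Matrix.mulVec_zero]

lemma aux_expMat_mulVec_one (M : Matrix (Fin n) (Fin n) ℝ) (h : M.mulVec 1 = 0) :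
    (exp M).mulVec 1 = 1 := by
  letI : SeminormedRing (Matrix (Fin n) (Fin n) ℝ) := Matrix.linftyOpSemiNormedRing
  letI : NormedRing (Matrix (Fin n) (Fin n) ℝ) := Matrix.linftyOpNormedRing
  letI : NormedAlgebra ℝ (Matrix (Fin n) (Fin n) ℝ) := Matrix.linftyOpNormedAlgebra
  let f : Matrix (Fin n) (Fin n) ℝ →ₗ[ℝ] (Fin n → ℝ) :=
    { toFun := fun A => A.mulVec 1
      map_add' := fun A B => Matrix.add_mulVec A B 1
      map_smul' := fun c A => Matrix.smul_mulVec c A 1 }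
  let F := LinearMap.toContinuousLinearMap f
  have hsum := expSeries_summable' (𝕂 := ℝ) M
  have key : F (exp M) = ∑' k : ℕ, F (((k.factorial : ℝ))⁻¹ • M ^ k) := by
    rw [exp_eq_tsum ℝ]
    exact (F.map_tsum hsum)
  have key2 : ∀ k : ℕ, F (((k.factorial : ℝ))⁻¹ • M ^ k)
      = if k = 0 then 1 else 0 := by
    intro k
    rcases eq_or_ne k 0 with rfl | hk
    · rw [if_pos rfl, Nat.factorial_zero, Nat.cast_one, inv_one, pow_zero]
      have : F ((1:ℝ) • (1 : Matrix (Fin n) (Fin n) ℝ)) = (1 : Matrix (Fin n) (Fin n) ℝ).mulVec 1 := by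
        simp [F, f]
      simpa [Matrix.one_mulVec] using this
    · rw [_root_.map_smul, if_neg hk]
      have h0 : F (M ^ k) = 0 := aux_pow_mulVec_one M h k hk
      rw [h0, smul_zero]
  have : F (exp M) = 1 := by
    rw [key, tsum_eq_single 0 (fun k hk => by rw [key2 k, if_neg hk])]
    rw [key2 0, if_pos rfl]
  exact this

lemma aux_pow_entries_nonneg (N : Matrix (Fin n) (Fin n) ℝ) (h : ∀ i j, 0 ≤ N i j) (k : ℕ) :
    ∀ i j, 0 ≤ (N ^ k) i j := by
  induction k with
  | zero =>
    intro i j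
    rw [pow_zero]
    rcases eq_or_ne i j with rfl | hij
    · simp [Matrix.one_apply]
    · simp [Matrix.one_apply, hij]
  | succ m ih =>
    intro i j
    rw [pow_succ, Matrix.mul_apply]
    exact Finset.sum_nonneg fun l _ => mul_nonneg (ih i l) (h l j)

lemma aux_exp_entries_nonneg (M : Matrix (Fin n) (Fin n) ℝ) (h : ∀ i j, i ≠ j → 0 ≤ M i j) :
    ∀ i j, 0 ≤ exp M i j := by
  letI : SeminormedRing (Matrix (Fin n) (Fin n) ℝ) := Matrix.linftyOpSemiNormedRing
  letI : NormedRing (Matrix (Fin n) (Fin n) ℝ) := Matrix.linftyOpNormedRing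
  letI : NormedAlgebra ℝ (Matrix (Fin n) (Fin n) ℝ) := Matrix.linftyOpNormedAlgebra
  set c : ℝ := ∑ i, |M i i| with hc
  set N : Matrix (Fin n) (Fin n) ℝ := M + c • (1 : Matrix (Fin n) (Fin n) ℝ) with hN
  have hNpos : ∀ i j, 0 ≤ N i j := by
    intro i j
    rcases eq_or_ne i j with rfl | hij
    · have h1 : |M i i| ≤ c := Finset.single_le_sum (fun l _ => abs_nonneg (M l l)) (Finset.mem_univ i)
      have : -M i i ≤ c := le_trans (neg_le_abs _) h1
      simp [hN, Matrix.one_apply]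
      linarith
    · simpa [hN, Matrix.one_apply, hij] using h i j hij
  have hsplit : exp M = Real.exp (-c) • exp N := by
    have hM : M = N + (-c) • (1 : Matrix (Fin n) (Fin n) ℝ) := by
      rw [hN]; ring_nf; rw [neg_smul]; abel
    rw [hM]
    erw [NormedSpace.exp_add_of_commute_of_mem_ball (𝕂 := ℝ) ((Commute.one_right N).smul_right (-c))
      ((expSeries_radius_eq_top ℝ (Matrix (Fin n) (Fin n) ℝ)).symm ▸ edist_lt_top _ _)
      ((expSeries_radius_eq_top ℝ (Matrix (Fin n) (Fin n) ℝ)).symm ▸ edist_lt_top _ _)]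
    have : exp ((-c) • (1 : Matrix (Fin n) (Fin n) ℝ)) = Real.exp (-c) • 1 := by
      have h1 : ((-c) • (1 : Matrix (Fin n) (Fin n) ℝ)) = algebraMap ℝ _ (-c) := by
        simp [Algebra.algebraMap_eq_smul_one]
      rw [h1]
      erw [← algebraMap_exp_comm]
      rw [Real.exp_eq_exp_ℝ]
      simp [Algebra.algebraMap_eq_smul_one]
    erw [this]
    rw [mul_smul_comm, mul_one]
    rfl
  intro i j
  rw [hsplit]
  have hNij : 0 ≤ exp N i j := by
    let G : Matrix (Fin n) (Fin n) ℝ →ₗ[ℝ] ℝ :=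
      { toFun := fun A => A i j
        map_add' := fun A B => rfl
        map_smul' := fun r A => rfl }
    let G' := LinearMap.toContinuousLinearMap G
    have hsum := expSeries_summable' (𝕂 := ℝ) N
    have key : G' (exp N) = ∑' k : ℕ, G' (((k.factorial : ℝ))⁻¹ • N ^ k) := by
      rw [exp_eq_tsum ℝ]; exact G'.map_tsum hsum
    have : 0 ≤ G' (exp N) := by
      rw [key]
      refine tsum_nonneg fun k => ?_
      have : G' (((k.factorial : ℝ))⁻¹ • N ^ k) = ((k.factorial : ℝ))⁻¹ * (N ^ k) i j := rfl
      rw [this]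
      exact mul_nonneg (by positivity) (aux_pow_entries_nonneg N hNpos k i j)
    exact this
  have : (Real.exp (-c) • exp N) i j = Real.exp (-c) * exp N i j := rfl
  rw [this]
  exact mul_nonneg (Real.exp_pos _).le hNij

end AuxMatrix

section AuxNorm

open NormedSpace

variable (p : ENNReal) [Fact (1 ≤ p)] {n : ℕ}

lemma aux_lpNorm_one_eq (x : Fin n → ℝ) : lpNorm 1 x = ∑ i, |x i| := by
  rw [_root_.lpNorm, PiLp.norm_eq_sum (by norm_num)]
  simp [Real.norm_eq_abs]

lemma aux_lpNorm_top_eq (x : Fin n → ℝ) : lpNorm ⊤ x = ⨆ i, |x i| := by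
  rw [_root_.lpNorm, PiLp.norm_eq_ciSup]
  simp [Real.norm_eq_abs]

lemma aux_lpNorm_two_eq (x : Fin n → ℝ) : lpNorm 2 x = Real.sqrt (∑ i, (x i)^2) := by
  rw [_root_.lpNorm, EuclideanSpace.norm_eq]
  congr 1
  simp [Real.norm_eq_abs, sq_abs]

lemma aux_stoch_contract (hp : p = 1 ∨ p = 2 ∨ p = ⊤)
    (P : Matrix (Fin n) (Fin n) ℝ) (hpos : ∀ i j, 0 ≤ P i j)
    (hrow : ∀ i, ∑ j, P i j = 1) (hcol : ∀ j, ∑ i, P i j = 1) (x : Fin n → ℝ) :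
    lpNorm p (P.mulVec x) ≤ lpNorm p x := by
  have habs : ∀ i, |P.mulVec x i| ≤ ∑ j, P i j * |x j| := by
    intro i
    rw [Matrix.mulVec, dotProduct]
    refine (Finset.abs_sum_le_sum_abs _ _).trans ?_
    refine Finset.sum_le_sum fun j _ => ?_
    rw [abs_mul, abs_of_nonneg (hpos i j)]
  rcases hp with rfl | rfl | rfl
  · rw [aux_lpNorm_one_eq, aux_lpNorm_one_eq]
    calc ∑ i, |P.mulVec x i| ≤ ∑ i, ∑ j, P i j * |x j| := Finset.sum_le_sum fun i _ => habs i
    _ = ∑ j, (∑ i, P i j) * |x j| := by rw [Finset.sum_comm]; simp [Finset.sum_mul]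
    _ = ∑ j, |x j| := by simp [hcol]
  · rw [aux_lpNorm_two_eq, aux_lpNorm_two_eq]
    refine Real.sqrt_le_sqrt ?_
    calc ∑ i, (P.mulVec x i)^2
        ≤ ∑ i, ∑ j, P i j * (x j)^2 := by
          refine Finset.sum_le_sum fun i _ => ?_
          have h1 : (P.mulVec x i)^2 ≤ (∑ j, P i j * |x j|)^2 := by
            have := habs i
            have h0 : 0 ≤ ∑ j, P i j * |x j| :=
              Finset.sum_nonneg fun j _ => mul_nonneg (hpos i j) (abs_nonneg _)
            calc (P.mulVec x i)^2 = |P.mulVec x i|^2 := (sq_abs _).symm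
            _ ≤ _ := by apply pow_le_pow_left₀ (abs_nonneg _) this
          refine h1.trans ?_
          have h2 : (∑ j, Real.sqrt (P i j) * (Real.sqrt (P i j) * |x j|))^2
              ≤ (∑ j, Real.sqrt (P i j)^2) * ∑ j, (Real.sqrt (P i j) * |x j|)^2 :=
            Finset.sum_mul_sq_le_sq_mul_sq _ _ _
          have e1 : ∀ j, Real.sqrt (P i j) * (Real.sqrt (P i j) * |x j|) = P i j * |x j| := by
            intro j; rw [← mul_assoc, Real.mul_self_sqrt (hpos i j)]
          have e2 : ∀ j, Real.sqrt (P i j)^2 = P i j := fun j => Real.sq_sqrt (hpos i j)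
          have e3 : ∀ j, (Real.sqrt (P i j) * |x j|)^2 = P i j * (x j)^2 := by
            intro j; rw [mul_pow, e2, sq_abs]
          simp only [e1, e2, e3] at h2
          rw [hrow i, one_mul] at h2
          exact h2
    _ = ∑ j, (x j)^2 := by
          rw [Finset.sum_comm]
          simp only [← Finset.sum_mul]
          simp [hcol]
  · rw [aux_lpNorm_top_eq, aux_lpNorm_top_eq]
    refine Real.iSup_le (fun i => ?_) (Real.iSup_nonneg fun j => abs_nonneg _)
    refine (habs i).trans ?_
    calc ∑ j, P i j * |x j| ≤ ∑ j, P i j * ⨆ k, |x k| := by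
          refine Finset.sum_le_sum fun j _ => ?_
          exact mul_le_mul_of_nonneg_left
            (le_ciSup (f := fun k => |x k|) (Set.Finite.bddAbove (Set.finite_range _)) j) (hpos i j)
    _ = ⨆ k, |x k| := by rw [← Finset.sum_mul, hrow i, one_mul]

noncomputable def matCLM (M : Matrix (Fin n) (Fin n) ℝ) :
    (PiLp p fun _ : Fin n => ℝ) →L[ℝ] PiLp p fun _ : Fin n => ℝ :=
  LinearMap.toContinuousLinearMap
    ((WithLp.linearEquiv p ℝ (Fin n → ℝ)).symm.toLinearMap ∘ₗ M.mulVecLin ∘ₗ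
      (WithLp.linearEquiv p ℝ (Fin n → ℝ)).toLinearMap)

lemma matCLM_apply (M : Matrix (Fin n) (Fin n) ℝ) (x : PiLp p fun _ : Fin n => ℝ) :
    matCLM p M x = (WithLp.equiv p (Fin n → ℝ)).symm (M.mulVec (WithLp.equiv p (Fin n → ℝ) x)) :=
  rfl

lemma matCLM_norm (M : Matrix (Fin n) (Fin n) ℝ) (x : Fin n → ℝ) :
    ‖matCLM p M ((WithLp.equiv p (Fin n → ℝ)).symm x)‖ = lpNorm p (M.mulVec x) := by
  rw [matCLM_apply]
  simp [_root_.lpNorm]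

noncomputable def matAlgHom :
    Matrix (Fin n) (Fin n) ℝ →ₐ[ℝ]
      ((PiLp p fun _ : Fin n => ℝ) →L[ℝ] PiLp p fun _ : Fin n => ℝ) where
  toFun := matCLM p
  map_one' := by ext x; simp [matCLM_apply]
  map_mul' M N := by
    ext x
    simp [matCLM_apply, Matrix.mulVec_mulVec]
  map_zero' := by ext x; simp [matCLM_apply]
  map_add' M N := by ext x; simp [matCLM_apply, Matrix.add_mulVec]
  commutes' r := by
    ext x
    simp [matCLM_apply, Algebra.algebraMap_eq_smul_one, Matrix.smul_mulVec]

lemma matCLM_exp (M : Matrix (Fin n) (Fin n) ℝ) :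
    matCLM p (exp M) = exp (matCLM p M) := by
  letI : SeminormedRing (Matrix (Fin n) (Fin n) ℝ) := Matrix.linftyOpSemiNormedRing
  letI : NormedRing (Matrix (Fin n) (Fin n) ℝ) := Matrix.linftyOpNormedRing
  letI : NormedAlgebra ℝ (Matrix (Fin n) (Fin n) ℝ) := Matrix.linftyOpNormedAlgebra
  have hcont : Continuous (matAlgHom p (n := n)) :=
    LinearMap.continuous_of_finiteDimensional (matAlgHom p (n := n)).toLinearMap
  exact map_exp_of_mem_ball (𝕂 := ℝ) (matAlgHom p (n := n)) hcont M
    ((expSeries_radius_eq_top ℝ (Matrix (Fin n) (Fin n) ℝ)).symm ▸ edist_lt_top _ _)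

lemma matCLM_smul (c : ℝ) (M : Matrix (Fin n) (Fin n) ℝ) :
    matCLM p (c • M) = c • matCLM p M := by
  ext x
  simp [matCLM_apply, Matrix.smul_mulVec]

lemma matCLM_add (M N : Matrix (Fin n) (Fin n) ℝ) :
    matCLM p (M + N) = matCLM p M + matCLM p N :=
  map_add (matAlgHom p) M N

lemma aux_lpNorm_smul (c : ℝ) (x : Fin n → ℝ) : lpNorm p (c • x) = |c| * lpNorm p x := by
  rw [_root_.lpNorm, _root_.lpNorm]
  have : (WithLp.equiv p (Fin n → ℝ)).symm (c • x) = c • (WithLp.equiv p (Fin n → ℝ)).symm x := rfl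
  rw [this, norm_smul, Real.norm_eq_abs]

lemma aux_lpNorm_eq_zero {x : Fin n → ℝ} (h : lpNorm p x = 0) : x = 0 := by
  have := norm_eq_zero.mp h
  simpa using congrArg (WithLp.equiv p (Fin n → ℝ)) this

lemma aux_lpOpNorm_nonneg (M : Matrix (Fin n) (Fin n) ℝ) : 0 ≤ lpOpNorm p M :=
  Real.sSup_nonneg (by rintro y ⟨x, -, rfl⟩; exact norm_nonneg _)

lemma aux_lpOpNorm_le (M : Matrix (Fin n) (Fin n) ℝ) {C : ℝ} (hC : 0 ≤ C)
    (h : ∀ x, lpNorm p (M.mulVec x) ≤ C * lpNorm p x) : lpOpNorm p M ≤ C := by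
  refine Real.sSup_le ?_ hC
  rintro y ⟨x, hx, rfl⟩
  simpa [Set.mem_setOf_eq.mp hx] using h x

lemma aux_lpNorm_mulVec_le (M : Matrix (Fin n) (Fin n) ℝ) (x : Fin n → ℝ) :
    lpNorm p (M.mulVec x) ≤ lpOpNorm p M * lpNorm p x := by
  rcases eq_or_ne (lpNorm p x) 0 with h0 | h0
  · have hz : lpNorm p (0 : Fin n → ℝ) = 0 := by simp [_root_.lpNorm]
    rw [aux_lpNorm_eq_zero p h0, Matrix.mulVec_zero, hz, mul_zero]
  · have hx : 0 < lpNorm p x := lt_of_le_of_ne (norm_nonneg _) (Ne.symm h0)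
    set u := (lpNorm p x)⁻¹ • x with hu
    have hun : lpNorm p u = 1 := by
      rw [hu, aux_lpNorm_smul, abs_of_pos (inv_pos.mpr hx), inv_mul_cancel₀ h0]
    have hbdd : BddAbove ((fun x => lpNorm p (M.mulVec x)) '' {x : Fin n → ℝ | lpNorm p x = 1}) := by
      refine ⟨‖matCLM p M‖, ?_⟩
      rintro y ⟨z, hz, rfl⟩
      have := (matCLM p M).le_opNorm ((WithLp.equiv p (Fin n → ℝ)).symm z)
      rw [matCLM_norm] at this
      have hz1 : ‖(WithLp.equiv p (Fin n → ℝ)).symm z‖ = 1 := hz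
      rw [hz1, mul_one] at this
      exact this
    have hmem : lpNorm p (M.mulVec u) ∈
        (fun x => lpNorm p (M.mulVec x)) '' {x : Fin n → ℝ | lpNorm p x = 1} := ⟨u, hun, rfl⟩
    have hle : lpNorm p (M.mulVec u) ≤ lpOpNorm p M := le_csSup hbdd hmem
    have heq : lpNorm p (M.mulVec x) = lpNorm p x * lpNorm p (M.mulVec u) := by
      rw [hu, Matrix.mulVec_smul, aux_lpNorm_smul, abs_of_pos (inv_pos.mpr hx)]
      field_simp
    rw [heq, mul_comm (lpOpNorm p M)]
    exact mul_le_mul_of_nonneg_left hle hx.le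

lemma matCLM_opNorm_le (M : Matrix (Fin n) (Fin n) ℝ) : ‖matCLM p M‖ ≤ lpOpNorm p M := by
  refine ContinuousLinearMap.opNorm_le_bound _ (aux_lpOpNorm_nonneg p M) fun x => ?_
  have := aux_lpNorm_mulVec_le p M (WithLp.equiv p (Fin n → ℝ) x)
  have hx : (WithLp.equiv p (Fin n → ℝ)).symm (WithLp.equiv p (Fin n → ℝ) x) = x := rfl
  rw [← matCLM_norm p M] at this
  rw [hx] at this
  exact this.trans_eq (by rw [_root_.lpNorm]; rfl)

lemma aux_laplacian_exp_stoch {L : Matrix (Fin n) (Fin n) ℝ} (hL : IsGraphLaplacian L)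
    {t : ℝ} (ht : 0 ≤ t) :
    (∀ i j, 0 ≤ exp ((-t) • L) i j) ∧ (∀ i, ∑ j, exp ((-t) • L) i j = 1) ∧
      (∀ j, ∑ i, exp ((-t) • L) i j = 1) := by
  obtain ⟨hsymm, hoff, hrow⟩ := hL
  set M : Matrix (Fin n) (Fin n) ℝ := (-t) • L with hM
  have hMoff : ∀ i j, i ≠ j → 0 ≤ M i j := by
    intro i j hij
    have : M i j = (-t) * L i j := rfl
    rw [this]
    have h2 := hoff i j hij
    nlinarith
  have hM1 : M.mulVec 1 = 0 := by
    funext i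
    have h3 : M.mulVec 1 i = ∑ j, M i j * 1 := rfl
    rw [h3]
    simp only [mul_one]
    have h4 : ∑ j, M i j = (-t) * ∑ j, L i j := by
      rw [Finset.mul_sum]; rfl
    rw [Pi.zero_apply, h4, hrow i, mul_zero]
  have hpos := aux_exp_entries_nonneg M hMoff
  have hrow1 : ∀ i, ∑ j, exp M i j = 1 := by
    intro i
    have h1 := congrFun (aux_expMat_mulVec_one M hM1) i
    have h2 : (exp M).mulVec 1 i = ∑ j, exp M i j * 1 := rfl
    rw [h2] at h1
    simpa using h1
  have hMsymm : M.IsSymm := by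
    rw [hM, Matrix.IsSymm, Matrix.transpose_smul, hsymm]
  have hPsymm : (exp M).IsSymm := hMsymm.exp
  refine ⟨hpos, hrow1, fun j => ?_⟩
  calc ∑ i, exp M i j = ∑ i, exp M j i := by
        refine Finset.sum_congr rfl fun i _ => ?_
        exact hPsymm.apply j i
  _ = 1 := hrow1 j

lemma aux_exp_opNorm_le (hp : p = 1 ∨ p = 2 ∨ p = ⊤)
    {L : Matrix (Fin n) (Fin n) ℝ} (hL : IsGraphLaplacian L) {t : ℝ} (ht : 0 ≤ t) :
    ‖exp ((-t) • matCLM p L)‖ ≤ 1 := by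
  rw [← matCLM_smul, ← matCLM_exp]
  refine ContinuousLinearMap.opNorm_le_bound _ zero_le_one fun x => ?_
  obtain ⟨hpos, hrow, hcol⟩ := aux_laplacian_exp_stoch hL ht
  have hcontr := aux_stoch_contract p hp _ hpos hrow hcol (WithLp.equiv p (Fin n → ℝ) x)
  have hx : (WithLp.equiv p (Fin n → ℝ)).symm (WithLp.equiv p (Fin n → ℝ) x) = x := rfl
  rw [← matCLM_norm p _] at hcontr
  rw [hx] at hcontr
  rw [one_mul]
  exact hcontr.trans_eq (by rw [_root_.lpNorm]; rfl)

lemma duhamel {𝔸 : Type*} [NormedRing 𝔸] [NormedAlgebra ℝ 𝔸] [CompleteSpace 𝔸] (A A' : 𝔸)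
    (hA : ∀ u : ℝ, 0 ≤ u → ‖exp ((-u) • A)‖ ≤ 1)
    (hA' : ∀ u : ℝ, 0 ≤ u → ‖exp ((-u) • A')‖ ≤ 1)
    {t : ℝ} (ht : 0 ≤ t) :
    ‖exp ((-t) • A') - exp ((-t) • A)‖ ≤ t * ‖A' - A‖ := by
  set g : ℝ → 𝔸 := fun s => exp ((-s) • A') * exp ((s - t) • A) with hg
  set D : ℝ → 𝔸 := fun s => exp ((-s) • A') * (A - A') * exp ((s - t) • A) with hD
  have hderiv : ∀ s : ℝ, HasDerivAt g (D s) s := by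
    intro s
    have h1 : HasDerivAt (fun s : ℝ => exp ((-s) • A'))
        ((-1 : ℝ) • (exp ((-s) • A') * A')) s := by
      have hneg : HasDerivAt (fun s : ℝ => -s) (-1 : ℝ) s := (hasDerivAt_id s).neg
      exact (hasDerivAt_exp_smul_const (𝕂 := ℝ) A' (-s)).scomp s hneg
    have h2 : HasDerivAt (fun s : ℝ => exp ((s - t) • A))
        ((1 : ℝ) • (exp ((s - t) • A) * A)) s := by
      have hsub : HasDerivAt (fun s : ℝ => s - t) (1 : ℝ) s := (hasDerivAt_id s).sub_const t
      exact (hasDerivAt_exp_smul_const (𝕂 := ℝ) A (s - t)).scomp s hsub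
    have hmul := h1.mul h2
    have hcomm : A * exp ((s - t) • A) = exp ((s - t) • A) * A :=
      (((Commute.refl A).smul_right (s - t)).exp_right).eq
    convert hmul using 1
    · rfl
    rw [hD]
    simp only [one_smul, neg_one_smul]
    rw [← hcomm]
    noncomm_ring
  have hbound : ∀ s ∈ Set.Icc (0:ℝ) t, ‖D s‖ ≤ ‖A' - A‖ := by
    rintro s ⟨hs0, hst⟩
    have e2 : ‖exp ((s - t) • A)‖ ≤ 1 := by
      have h : (s - t) = -(t - s) := by ring
      rw [h]
      exact hA (t - s) (by linarith)
    have e1 : ‖exp ((-s) • A')‖ ≤ 1 := hA' s hs0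
    calc ‖D s‖ ≤ ‖exp ((-s) • A') * (A - A')‖ * ‖exp ((s - t) • A)‖ := norm_mul_le _ _
    _ ≤ ‖exp ((-s) • A')‖ * ‖A - A'‖ * ‖exp ((s - t) • A)‖ :=
        mul_le_mul_of_nonneg_right (norm_mul_le _ _) (norm_nonneg _)
    _ ≤ 1 * ‖A - A'‖ * 1 := by
        refine mul_le_mul (mul_le_mul_of_nonneg_right e1 (norm_nonneg _)) e2 (norm_nonneg _) ?_
        positivity
    _ = ‖A' - A‖ := by rw [one_mul, mul_one, norm_sub_rev]
  have hmvt := Convex.norm_image_sub_le_of_norm_hasDerivWithin_le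
    (fun s hs => (hderiv s).hasDerivWithinAt) hbound (convex_Icc 0 t)
    (Set.left_mem_Icc.mpr ht) (Set.right_mem_Icc.mpr ht)
  have hgt : g t = exp ((-t) • A') := by simp [hg]
  have hg0 : g 0 = exp ((-t) • A) := by simp [hg]
  calc ‖exp ((-t) • A') - exp ((-t) • A)‖ = ‖g t - g 0‖ := by rw [hgt, hg0]
  _ ≤ ‖A' - A‖ * ‖t - 0‖ := hmvt
  _ = t * ‖A' - A‖ := by rw [sub_zero, Real.norm_eq_abs, abs_of_nonneg ht, mul_comm]

end AuxNorm

theorem spsDist_stability {n : ℕ} (L E : Matrix (Fin n) (Fin n) ℝ)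
    (hL : IsGraphLaplacian L) (hL' : IsGraphLaplacian (L + E))
    (p : ENNReal) [Fact (1 ≤ p)] (hp : p = 1 ∨ p = 2 ∨ p = ⊤)
    (ε γ : ℝ) (hε : 0 < ε)
    (hE : lpOpNorm p E ≤ ε * lpOpNorm p L) (hsmall : ε * lpOpNorm p L < 1)
    (s r : Fin n → ℝ) (hs : lpNorm p s ≤ γ) (hr : lpNorm p r ≤ γ) :
    |spsDistP p (L + E) s r - spsDistP p L s r| ≤ 2 * γ * lpOpNorm p L * ε := by
  classical
  set A : (PiLp p fun _ : Fin n => ℝ) →L[ℝ] PiLp p fun _ : Fin n => ℝ := matCLM p L with hA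
  set A' : (PiLp p fun _ : Fin n => ℝ) →L[ℝ] PiLp p fun _ : Fin n => ℝ := matCLM p (L + E) with hA'
  set Y : PiLp p fun _ : Fin n => ℝ := (WithLp.equiv p (Fin n → ℝ)).symm (s - r) with hY
  have hYnorm : ‖Y‖ = lpNorm p (s - r) := rfl
  have hY2γ : ‖Y‖ ≤ 2 * γ := by
    rw [hYnorm]
    have : lpNorm p (s - r) ≤ lpNorm p s + lpNorm p r := by
      rw [_root_.lpNorm, _root_.lpNorm, _root_.lpNorm]
      exact norm_sub_le _ _
    linarith
  have hγ : 0 ≤ γ := le_trans (norm_nonneg _) hs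
  -- the two integrands, expressed via CLMs
  have hexpr : ∀ (M : Matrix (Fin n) (Fin n) ℝ) (t : ℝ),
      lpNorm p ((NormedSpace.exp ((-t) • M)).mulVec (s - r))
        = ‖NormedSpace.exp ((-t) • matCLM p M) Y‖ := by
    intro M t
    rw [← matCLM_smul, ← matCLM_exp, hY, matCLM_norm]
  set F : ℝ → ℝ := fun t => Real.exp (-t) * ‖NormedSpace.exp ((-t) • A) Y‖ with hF
  set F' : ℝ → ℝ := fun t => Real.exp (-t) * ‖NormedSpace.exp ((-t) • A') Y‖ with hF'
  have hsps : spsDistP p L s r = ∫ t in Set.Ioi (0:ℝ), F t := by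
    refine setIntegral_congr_fun (measurableSet_Ioi) fun t _ => ?_
    rw [hF]; simp only []
    rw [hexpr L t]
  have hsps' : spsDistP p (L + E) s r = ∫ t in Set.Ioi (0:ℝ), F' t := by
    refine setIntegral_congr_fun (measurableSet_Ioi) fun t _ => ?_
    rw [hF']; simp only []
    rw [hexpr (L + E) t]
  have hcontr : ∀ u : ℝ, 0 ≤ u → ‖NormedSpace.exp ((-u) • A)‖ ≤ 1 :=
    fun u hu => aux_exp_opNorm_le p hp hL hu
  have hcontr' : ∀ u : ℝ, 0 ≤ u → ‖NormedSpace.exp ((-u) • A')‖ ≤ 1 :=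
    fun u hu => aux_exp_opNorm_le p hp hL' hu
  -- continuity of the integrands
  have hcF : ∀ (B : (PiLp p fun _ : Fin n => ℝ) →L[ℝ] PiLp p fun _ : Fin n => ℝ),
      Continuous (fun t : ℝ => Real.exp (-t) * ‖NormedSpace.exp ((-t) • B) Y‖) := by
    intro B
    have h1 : Continuous fun t : ℝ => NormedSpace.exp ((-t) • B) :=
      (show Continuous (NormedSpace.exp : ((PiLp p fun _ : Fin n => ℝ) →L[ℝ] PiLp p fun _ : Fin n => ℝ) → _) by
        rw [← continuousOn_univ, ← Metric.eball_top_eq_univ (0 : _),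
          ← NormedSpace.expSeries_radius_eq_top ℝ ((PiLp p fun _ : Fin n => ℝ) →L[ℝ] PiLp p fun _ : Fin n => ℝ)]
        exact NormedSpace.continuousOn_exp).comp ((continuous_neg.comp continuous_id).smul continuous_const)
    have h2 : Continuous fun t : ℝ => NormedSpace.exp ((-t) • B) Y :=
      (ContinuousLinearMap.apply ℝ _ Y).continuous.comp h1
    exact (Real.continuous_exp.comp continuous_neg).mul h2.norm
  -- integrability
  have hexpint : IntegrableOn (fun t : ℝ => Real.exp (-t)) (Set.Ioi (0:ℝ)) := by
    have := exp_neg_integrableOn_Ioi (0:ℝ) (b := 1) one_pos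
    simpa using this
  have hint : ∀ (B : (PiLp p fun _ : Fin n => ℝ) →L[ℝ] PiLp p fun _ : Fin n => ℝ),
      (∀ u : ℝ, 0 ≤ u → ‖NormedSpace.exp ((-u) • B)‖ ≤ 1) →
      IntegrableOn (fun t : ℝ => Real.exp (-t) * ‖NormedSpace.exp ((-t) • B) Y‖)
        (Set.Ioi (0:ℝ)) := by
    intro B hB
    refine Integrable.mono' (hexpint.mul_const ‖Y‖) ((hcF B).aestronglyMeasurable) ?_
    refine (ae_restrict_iff' measurableSet_Ioi).mpr (Filter.Eventually.of_forall ?_)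
    intro t ht
    have htpos : (0:ℝ) ≤ t := le_of_lt ht
    have h1 : ‖NormedSpace.exp ((-t) • B) Y‖ ≤ ‖Y‖ := by
      calc ‖NormedSpace.exp ((-t) • B) Y‖ ≤ ‖NormedSpace.exp ((-t) • B)‖ * ‖Y‖ :=
        ContinuousLinearMap.le_opNorm _ _
      _ ≤ 1 * ‖Y‖ := mul_le_mul_of_nonneg_right (hB t htpos) (norm_nonneg _)
      _ = ‖Y‖ := one_mul _
    have h0 : 0 ≤ Real.exp (-t) * ‖NormedSpace.exp ((-t) • B) Y‖ :=
      mul_nonneg (Real.exp_pos _).le (norm_nonneg _)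
    rw [Real.norm_eq_abs, abs_of_nonneg h0]
    exact mul_le_mul_of_nonneg_left h1 (Real.exp_pos _).le
  have hintF : IntegrableOn F (Set.Ioi (0:ℝ)) := hint A hcontr
  have hintF' : IntegrableOn F' (Set.Ioi (0:ℝ)) := hint A' hcontr'
  -- the pointwise bound on the difference
  set c : ℝ := lpOpNorm p E * (2 * γ) with hc
  have hcnonneg : 0 ≤ c := mul_nonneg (aux_lpOpNorm_nonneg p E) (by linarith)
  have hdiff : ∀ t ∈ Set.Ioi (0:ℝ), |F' t - F t| ≤ c * (t * Real.exp (-t)) := by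
    intro t ht
    have htpos : (0:ℝ) ≤ t := le_of_lt ht
    have hdu := duhamel A A' hcontr hcontr' htpos
    have hAA : A' - A = matCLM p E := by
      rw [hA', hA, matCLM_add]; abel
    have hstep : |‖NormedSpace.exp ((-t) • A') Y‖ - ‖NormedSpace.exp ((-t) • A) Y‖|
        ≤ t * lpOpNorm p E * ‖Y‖ := by
      refine le_trans (abs_norm_sub_norm_le _ _) ?_
      have : NormedSpace.exp ((-t) • A') Y - NormedSpace.exp ((-t) • A) Y
          = (NormedSpace.exp ((-t) • A') - NormedSpace.exp ((-t) • A)) Y := by simp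
      rw [this]
      calc ‖(NormedSpace.exp ((-t) • A') - NormedSpace.exp ((-t) • A)) Y‖
          ≤ ‖NormedSpace.exp ((-t) • A') - NormedSpace.exp ((-t) • A)‖ * ‖Y‖ :=
            ContinuousLinearMap.le_opNorm _ _
      _ ≤ t * ‖A' - A‖ * ‖Y‖ := mul_le_mul_of_nonneg_right hdu (norm_nonneg _)
      _ ≤ t * lpOpNorm p E * ‖Y‖ := by
          refine mul_le_mul_of_nonneg_right ?_ (norm_nonneg _)
          refine mul_le_mul_of_nonneg_left ?_ htpos
          rw [hAA]
          exact matCLM_opNorm_le p E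
    have : F' t - F t = Real.exp (-t) * (‖NormedSpace.exp ((-t) • A') Y‖
        - ‖NormedSpace.exp ((-t) • A) Y‖) := by rw [hF', hF]; ring
    rw [this, abs_mul, abs_of_pos (Real.exp_pos _)]
    calc Real.exp (-t) * |‖NormedSpace.exp ((-t) • A') Y‖ - ‖NormedSpace.exp ((-t) • A) Y‖|
        ≤ Real.exp (-t) * (t * lpOpNorm p E * ‖Y‖) :=
          mul_le_mul_of_nonneg_left hstep (Real.exp_pos _).le
    _ ≤ Real.exp (-t) * (t * lpOpNorm p E * (2 * γ)) := by
          refine mul_le_mul_of_nonneg_left ?_ (Real.exp_pos _).le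
          refine mul_le_mul_of_nonneg_left hY2γ ?_
          exact mul_nonneg htpos (aux_lpOpNorm_nonneg p E)
    _ = c * (t * Real.exp (-t)) := by rw [hc]; ring
  -- the Gamma integral
  have htexp_int : IntegrableOn (fun t : ℝ => t * Real.exp (-t)) (Set.Ioi (0:ℝ)) := by
    have h := Real.GammaIntegral_convergent (s := 2) (by norm_num)
    refine h.congr_fun ?_ measurableSet_Ioi
    intro t ht
    show Real.exp (-t) * t ^ ((2:ℝ) - 1) = t * Real.exp (-t)
    rw [show (2:ℝ) - 1 = 1 by norm_num, Real.rpow_one]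
    ring
  have htexp_val : ∫ t in Set.Ioi (0:ℝ), t * Real.exp (-t) = 1 := by
    have h := Real.Gamma_eq_integral (s := 2) (by norm_num)
    rw [Real.Gamma_two] at h
    have heq : ∫ t in Set.Ioi (0:ℝ), t * Real.exp (-t)
        = ∫ t in Set.Ioi (0:ℝ), Real.exp (-t) * t ^ ((2:ℝ) - 1) := by
      refine setIntegral_congr_fun measurableSet_Ioi fun t ht => ?_
      show t * Real.exp (-t) = Real.exp (-t) * t ^ ((2:ℝ) - 1)
      rw [show (2:ℝ) - 1 = 1 by norm_num, Real.rpow_one]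
      ring
    rw [heq, ← h]
  -- conclude
  have hfinal : |spsDistP p (L + E) s r - spsDistP p L s r| ≤ c := by
    rw [hsps, hsps']
    rw [← integral_sub hintF' hintF]
    have habs : |∫ t in Set.Ioi (0:ℝ), (F' t - F t)| ≤ ∫ t in Set.Ioi (0:ℝ), ‖F' t - F t‖ := by
      rw [← Real.norm_eq_abs]
      exact norm_integral_le_integral_norm _
    refine le_trans habs ?_
    have hint1 : IntegrableOn (fun t : ℝ => ‖F' t - F t‖) (Set.Ioi (0:ℝ)) :=
      (hintF'.sub hintF).norm
    have hint2 : IntegrableOn (fun t : ℝ => c * (t * Real.exp (-t))) (Set.Ioi (0:ℝ)) :=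
      htexp_int.const_mul c
    calc ∫ t in Set.Ioi (0:ℝ), ‖F' t - F t‖
        ≤ ∫ t in Set.Ioi (0:ℝ), c * (t * Real.exp (-t)) := by
          refine setIntegral_mono_on hint1 hint2 measurableSet_Ioi ?_
          intro t ht
          rw [Real.norm_eq_abs]
          exact hdiff t ht
    _ = c * ∫ t in Set.Ioi (0:ℝ), t * Real.exp (-t) := MeasureTheory.integral_const_mul c _
    _ = c := by rw [htexp_val, mul_one]
  refine hfinal.trans ?_
  rw [hc]
  calc lpOpNorm p E * (2 * γ) ≤ (ε * lpOpNorm p L) * (2 * γ) :=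
        mul_le_mul_of_nonneg_right hE (by linarith)
  _ = 2 * γ * lpOpNorm p L * ε := by ring
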